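/- arXiv:2312.11200 — 2 statements merged into one kernel-verified Lean document; each statement's English description precedes it below -/
import Mathlib

section
/- Let p > 0, α > 0 and κ ≥ 1 be real numbers. The function k(X) = log(Tr(X^{−p})) is μ-strongly convex with respect to the Frobenius norm on the convex set 𝒟 = {X ∈ ℝ^{n×n} : X symmetric positive definite, λ_max(X) ≤ α, λ_max(X) ≤ κ·λ_min(X)}, with μ = p/(n·κ^p·α²). -/
open Matrix

/-- Largest eigenvalue of a (Hermitian) real matrix. -/
noncomputable def eigMax {n : ℕ} (M : Matrix (Fin n) (Fin n) ℝ) : ℝ :=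
  if h : M.IsHermitian then ⨆ i, h.eigenvalues i else 0

/-- Smallest eigenvalue of a (Hermitian) real matrix. -/
noncomputable def eigMin {n : ℕ} (M : Matrix (Fin n) (Fin n) ℝ) : ℝ :=
  if h : M.IsHermitian then ⨅ i, h.eigenvalues i else 0

/-- Spectral norm (largest singular value) of a real matrix. -/
noncomputable def specNorm {m n : ℕ} (A : Matrix (Fin m) (Fin n) ℝ) : ℝ :=
  Real.sqrt (eigMax (Aᵀ * A))

/-- Real power of a symmetric matrix, via the spectral decomposition:
`M ^ r` has the same eigenvectors as `M` and eigenvalues `λᵢ ^ r`. -/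
noncomputable def mpow {n : ℕ} (M : Matrix (Fin n) (Fin n) ℝ) (r : ℝ) :
    Matrix (Fin n) (Fin n) ℝ :=
  if h : M.IsHermitian then
    (h.eigenvectorUnitary : Matrix (Fin n) (Fin n) ℝ) *
      Matrix.diagonal (fun i => h.eigenvalues i ^ r) *
      (star h.eigenvectorUnitary : Matrix (Fin n) (Fin n) ℝ)
  else 0

/-- Frobenius norm of a real matrix. -/
noncomputable def frobNorm {m n : ℕ} (M : Matrix (Fin m) (Fin n) ℝ) : ℝ :=
  Real.sqrt ((Mᵀ * M).trace)


open MeasureTheory Set Filter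

open Matrix MeasureTheory Set Filter


section scalars

private lemma tend0' {lam : ℝ} (hl : 0 < lam) :
    Tendsto (fun s => Real.log (lam + s) - Real.log (1 + s)) atTop (nhds 0) := by
  have h : (fun s => Real.log (lam + s) - Real.log (1 + s)) =ᶠ[atTop]
      fun s => Real.log ((lam + s) / (1 + s)) := by
    filter_upwards [eventually_gt_atTop 0] with s hs
    rw [Real.log_div (by positivity) (by positivity)]
  rw [tendsto_congr' h]
  have h2 : Tendsto (fun s : ℝ => (lam + s) / (1 + s)) atTop (nhds 1) := by
    have h3 := Filter.Tendsto.div_atTop (f := fun s : ℝ => lam - 1) (l := atTop)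
      (tendsto_const_nhds) (tendsto_atTop_add_const_left _ 1 tendsto_id)
    have heq : (fun s : ℝ => (lam + s) / (1 + s)) =ᶠ[atTop] fun s => 1 + (lam - 1) / (1 + s) := by
      filter_upwards [eventually_gt_atTop 0] with s hs
      field_simp
      ring
    rw [tendsto_congr' heq]
    simpa using tendsto_const_nhds.add h3
  simpa [Function.comp_def] using (Real.continuousAt_log (by norm_num)).tendsto.comp h2

private lemma hder' {lam : ℝ} (hl : 0 < lam) : ∀ x ∈ Ici (0:ℝ),
    HasDerivAt (fun s => Real.log (lam + s) - Real.log (1 + s))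
      ((lam + x)⁻¹ - (1 + x)⁻¹) x := by
  intro x hx
  have hx0 : (0:ℝ) ≤ x := hx
  have h1 : (0:ℝ) < lam + x := by positivity
  have h2 : (0:ℝ) < 1 + x := by positivity
  have d1 : HasDerivAt (fun s : ℝ => Real.log (lam + s)) (lam + x)⁻¹ x := by
    have := (Real.hasDerivAt_log h1.ne').comp x ((hasDerivAt_id x).const_add lam)
    simpa [Function.comp_def] using this
  have d2 : HasDerivAt (fun s : ℝ => Real.log (1 + s)) (1 + x)⁻¹ x := by
    have := (Real.hasDerivAt_log h2.ne').comp x ((hasDerivAt_id x).const_add 1)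
    simpa [Function.comp_def] using this
  exact d1.sub d2

private lemma intlem {lam : ℝ} (hl : 0 < lam) :
    IntegrableOn (fun s : ℝ => (lam + s)⁻¹ - (1 + s)⁻¹) (Ioi 0) ∧
    ∫ s in Ioi (0:ℝ), ((lam + s)⁻¹ - (1 + s)⁻¹) = - Real.log lam := by
  rcases le_or_gt lam 1 with hc | hc
  · have hpos : ∀ x ∈ Ioi (0:ℝ), 0 ≤ (lam + x)⁻¹ - (1 + x)⁻¹ := by
      intro x hx
      have hx0 : (0:ℝ) < x := hx
      have h1 : (0:ℝ) < lam + x := by positivity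
      have h3 : lam + x ≤ 1 + x := by linarith
      have := inv_anti₀ h1 h3
      linarith
    have hint := integrableOn_Ioi_deriv_of_nonneg' (hder' hl) hpos (tend0' hl)
    refine ⟨hint, ?_⟩
    rw [integral_Ioi_of_hasDerivAt_of_nonneg' (hder' hl) hpos (tend0' hl)]
    simp [Real.log_nonpos_iff]
  · have hpos : ∀ x ∈ Ioi (0:ℝ), 0 ≤ (1 + x)⁻¹ - (lam + x)⁻¹ := by
      intro x hx
      have hx0 : (0:ℝ) < x := hx
      have h1 : (0:ℝ) < 1 + x := by positivity
      have h3 : 1 + x ≤ lam + x := by linarith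
      have := inv_anti₀ h1 h3
      linarith
    have hderiv2 : ∀ x ∈ Ici (0:ℝ),
        HasDerivAt (fun s => Real.log (1 + s) - Real.log (lam + s))
          ((1 + x)⁻¹ - (lam + x)⁻¹) x := by
      intro x hx
      have := (hder' hl x hx).neg
      simpa [neg_sub, Pi.neg_def] using this
    have htend : Tendsto (fun s => Real.log (1 + s) - Real.log (lam + s)) atTop (nhds 0) := by
      have := (tend0' hl).neg
      simpa [neg_sub] using this
    have hint := integrableOn_Ioi_deriv_of_nonneg' hderiv2 hpos htend
    have hval := integral_Ioi_of_hasDerivAt_of_nonneg' hderiv2 hpos htend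
    refine ⟨?_, ?_⟩
    · have h2 := hint.neg
      have h4 : (fun s : ℝ => (lam + s)⁻¹ - (1 + s)⁻¹) = fun s => -((1 + s)⁻¹ - (lam + s)⁻¹) := by
        ext s; ring
      rw [h4]; exact h2
    · have h4 : ∫ s in Ioi (0:ℝ), ((lam + s)⁻¹ - (1 + s)⁻¹)
          = - ∫ s in Ioi (0:ℝ), ((1 + s)⁻¹ - (lam + s)⁻¹) := by
        rw [← integral_neg]
        congr 1
        ext s
        ring
      rw [h4, hval]
      simp

private lemma psi_convex {A B α : ℝ} (hα : 0 < α) (hB : 0 ≤ B) (hAB : 2 * B * α^2 ≤ A) :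
    ConvexOn ℝ (Set.Ioc 0 α) (fun x => -A * Real.log x - B * x^2) := by
  have hD : Convex ℝ (Set.Ioc (0:ℝ) α) := convex_Ioc _ _
  have hint : interior (Set.Ioc (0:ℝ) α) = Set.Ioo 0 α := interior_Ioc
  have hcont : ContinuousOn (fun x => -A * Real.log x - B * x^2) (Set.Ioc 0 α) := by
    apply ContinuousOn.sub
    · exact (Real.continuousOn_log.mono (by intro x hx; exact ne_of_gt hx.1)).const_smul (-A)
    · exact (continuous_pow 2).continuousOn.const_smul B
  apply convexOn_of_hasDerivWithinAt2_nonneg hD hcont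
    (f' := fun x => -A / x - 2 * B * x) (f'' := fun x => A / x^2 - 2 * B)
  · intro x hx
    rw [hint] at hx
    have hx0 : x ≠ 0 := ne_of_gt hx.1
    have h1 : HasDerivAt (fun x : ℝ => -A * Real.log x) (-A * x⁻¹) x :=
      (Real.hasDerivAt_log hx0).const_mul (-A)
    have h2 : HasDerivAt (fun x : ℝ => B * x^2) (B * (2 * x)) x := by
      simpa using ((hasDerivAt_pow 2 x).const_mul B)
    have h3 := (h1.sub h2).hasDerivWithinAt (s := interior (Set.Ioc (0:ℝ) α))
    exact h3.congr_deriv (by ring)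
  · intro x hx
    rw [hint] at hx
    have hx0 : x ≠ 0 := ne_of_gt hx.1
    have h1 : HasDerivAt (fun x : ℝ => -A / x) (-(-A) / x^2) x := by
      simpa [Pi.div_def] using (hasDerivAt_const x (-A)).div (hasDerivAt_id x) hx0
    have h2 : HasDerivAt (fun x : ℝ => 2 * B * x) (2 * B) x := by
      simpa using (hasDerivAt_id x).const_mul (2*B)
    have h3 := (h1.sub h2).hasDerivWithinAt (s := interior (Set.Ioc (0:ℝ) α))
    exact h3.congr_deriv (by ring)
  · intro x hx
    rw [hint] at hx
    have hx0 : 0 < x := hx.1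
    have hxa : x ≤ α := le_of_lt hx.2
    have h1 : x^2 ≤ α^2 := by nlinarith
    have h2 : 2 * B * x^2 ≤ A := le_trans (by nlinarith) hAB
    have h3 : 2 * B ≤ A / x^2 := by
      rw [le_div_iff₀ (by positivity)]
      linarith [h2]
    linarith

/-- operator convexity of -log in averaged scalar form, via integral representation -/
private lemma neg_log_cvx {n : ℕ} (lX lY : Fin n → ℝ) (hlX : ∀ j, 0 < lX j) (hlY : ∀ j, 0 < lY j)
    (cX cY : Fin n → ℝ) (hsX : ∑ j, cX j = 1) (hsY : ∑ j, cY j = 1)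
    (a b : ℝ) (hab : a + b = 1) (ν : ℝ) (hν : 0 < ν)
    (key : ∀ s : ℝ, 0 < s →
      (ν + s)⁻¹ ≤ a * ∑ j, cX j * (lX j + s)⁻¹ + b * ∑ j, cY j * (lY j + s)⁻¹) :
    -Real.log ν ≤ a * ∑ j, cX j * (-Real.log (lX j)) + b * ∑ j, cY j * (-Real.log (lY j)) := by
  set gX : ℝ → ℝ := fun s => ∑ j, cX j * ((lX j + s)⁻¹ - (1+s)⁻¹) with hgX
  set gY : ℝ → ℝ := fun s => ∑ j, cY j * ((lY j + s)⁻¹ - (1+s)⁻¹) with hgY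
  have intX : IntegrableOn gX (Ioi 0) := by
    apply integrable_finset_sum
    intro j _
    exact ((intlem (hlX j)).1.const_mul (cX j))
  have intY : IntegrableOn gY (Ioi 0) := by
    apply integrable_finset_sum
    intro j _
    exact ((intlem (hlY j)).1.const_mul (cY j))
  have valX : ∫ s in Ioi (0:ℝ), gX s = ∑ j, cX j * (-Real.log (lX j)) := by
    rw [integral_finset_sum _ (fun j _ => ((intlem (hlX j)).1.const_mul (cX j)))]
    refine Finset.sum_congr rfl fun j _ => ?_
    rw [MeasureTheory.integral_const_mul, (intlem (hlX j)).2]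
  have valY : ∫ s in Ioi (0:ℝ), gY s = ∑ j, cY j * (-Real.log (lY j)) := by
    rw [integral_finset_sum _ (fun j _ => ((intlem (hlY j)).1.const_mul (cY j)))]
    refine Finset.sum_congr rfl fun j _ => ?_
    rw [MeasureTheory.integral_const_mul, (intlem (hlY j)).2]
  have intg : IntegrableOn (fun s => a * gX s + b * gY s) (Ioi 0) :=
    (intX.const_mul a).add (intY.const_mul b)
  have hmono : ∀ s ∈ Ioi (0:ℝ), (ν + s)⁻¹ - (1+s)⁻¹ ≤ a * gX s + b * gY s := by
    intro s hs
    have hs0 : (0:ℝ) < s := hs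
    have hXs : gX s = (∑ j, cX j * (lX j + s)⁻¹) - (1+s)⁻¹ := by
      rw [hgX]
      simp only [mul_sub]
      rw [Finset.sum_sub_distrib, ← Finset.sum_mul, hsX, one_mul]
    have hYs : gY s = (∑ j, cY j * (lY j + s)⁻¹) - (1+s)⁻¹ := by
      rw [hgY]
      simp only [mul_sub]
      rw [Finset.sum_sub_distrib, ← Finset.sum_mul, hsY, one_mul]
    have hk := key s hs0
    rw [hXs, hYs]
    have e : a * ((∑ j, cX j * (lX j + s)⁻¹) - (1+s)⁻¹) + b * ((∑ j, cY j * (lY j + s)⁻¹) - (1+s)⁻¹)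
        = a * (∑ j, cX j * (lX j + s)⁻¹) + b * (∑ j, cY j * (lY j + s)⁻¹) - (1+s)⁻¹ := by
      linear_combination (-(1+s)⁻¹) * hab
    rw [e]
    linarith
  have hint1 := (intlem hν).1
  have hmain := setIntegral_mono_on hint1 intg measurableSet_Ioi hmono
  rw [(intlem hν).2] at hmain
  rwa [MeasureTheory.integral_add (intX.const_mul a) (intY.const_mul b),
    MeasureTheory.integral_const_mul, MeasureTheory.integral_const_mul, valX, valY] at hmain

/-- Gibbs variational/Klein inequality, scalar form. -/
private lemma gibbs {n : ℕ} (hn : 0 < n) (p : ℝ) (l : Fin n → ℝ) (hl : ∀ j, 0 < l j)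
    (r : Fin n → ℝ) (hr : ∀ i, 0 < r i) (hrs : ∑ i, r i = 1)
    (C : Fin n → Fin n → ℝ) (hC0 : ∀ i j, 0 ≤ C i j)
    (hrow : ∀ i, ∑ j, C i j = 1) (hcol : ∀ j, ∑ i, C i j = 1) :
    (∑ i, r i * (-p * (∑ j, C i j * Real.log (l j)))) - ∑ i, r i * Real.log (r i)
      ≤ Real.log (∑ j, l j ^ (-p)) := by
  haveI : Nonempty (Fin n) := Fin.pos_iff_nonempty.mp hn
  set S : ℝ := ∑ j, l j ^ (-p) with hS
  have hS0 : 0 < S := Finset.sum_pos (fun j _ => Real.rpow_pos_of_pos (hl j) _)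
    Finset.univ_nonempty
  set q : Fin n → ℝ := fun j => l j ^ (-p) / S with hq
  have hq0 : ∀ j, 0 < q j := fun j => div_pos (Real.rpow_pos_of_pos (hl j) _) hS0
  have hqs : ∑ j, q j = 1 := by
    rw [hq, ← Finset.sum_div, ← hS, div_self hS0.ne']
  have hlogq : ∀ j, -p * Real.log (l j) = Real.log (q j) + Real.log S := by
    intro j
    rw [hq]
    rw [Real.log_div (Real.rpow_pos_of_pos (hl j) _).ne' hS0.ne', Real.log_rpow (hl j)]
    ring
  -- rewrite LHS first summand
  have expand : ∀ i, r i * (-p * (∑ j, C i j * Real.log (l j)))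
      = (∑ j, r i * C i j * Real.log (q j)) + r i * Real.log S := by
    intro i
    have : -p * (∑ j, C i j * Real.log (l j)) = ∑ j, C i j * (-p * Real.log (l j)) := by
      rw [Finset.mul_sum]
      exact Finset.sum_congr rfl fun j _ => by ring
    rw [this]
    simp only [hlogq]
    rw [Finset.mul_sum]
    have : ∑ j, r i * (C i j * (Real.log (q j) + Real.log S))
        = (∑ j, r i * C i j * Real.log (q j)) + (∑ j, C i j) * (r i * Real.log S) := by
      rw [Finset.sum_mul]
      rw [← Finset.sum_add_distrib]
      exact Finset.sum_congr rfl fun j _ => by ring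
    rw [this, hrow, one_mul]
  have hrlog : ∑ i, r i * Real.log (r i) = ∑ i, ∑ j, C i j * (r i * Real.log (r i)) := by
    refine Finset.sum_congr rfl fun i _ => ?_
    rw [← Finset.sum_mul, hrow, one_mul]
  have klein : (∑ i, ∑ j, r i * C i j * Real.log (q j))
      - ∑ i, r i * Real.log (r i) ≤ 0 := by
    rw [hrlog, ← Finset.sum_sub_distrib]
    have hterm : ∀ i, (∑ j, r i * C i j * Real.log (q j)) - ∑ j, C i j * (r i * Real.log (r i))
        = ∑ j, C i j * (r i * (Real.log (q j) - Real.log (r i))) := by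
      intro i
      rw [← Finset.sum_sub_distrib]
      exact Finset.sum_congr rfl fun j _ => by ring
    calc (∑ i, ((∑ j, r i * C i j * Real.log (q j)) - ∑ j, C i j * (r i * Real.log (r i))))
        = ∑ i, ∑ j, C i j * (r i * (Real.log (q j) - Real.log (r i))) :=
          Finset.sum_congr rfl fun i _ => hterm i
      _ ≤ ∑ i, ∑ j, C i j * (q j - r i) := by
          refine Finset.sum_le_sum fun i _ => Finset.sum_le_sum fun j _ => ?_
          refine mul_le_mul_of_nonneg_left ?_ (hC0 i j)
          have h1 : Real.log (q j) - Real.log (r i) = Real.log (q j / r i) := by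
            rw [Real.log_div (hq0 j).ne' (hr i).ne']
          rw [h1]
          have h2 : Real.log (q j / r i) ≤ q j / r i - 1 :=
            Real.log_le_sub_one_of_pos (div_pos (hq0 j) (hr i))
          have h3 := mul_le_mul_of_nonneg_left h2 (hr i).le
          calc r i * Real.log (q j / r i) ≤ r i * (q j / r i - 1) := h3
            _ = q j - r i := by
                have hri : r i ≠ 0 := (hr i).ne'
                field_simp
      _ = (∑ j, q j) - (∑ i, r i) := by
          have e1 : ∀ i, ∑ j, C i j * (q j - r i) = (∑ j, C i j * q j) - r i := by
            intro i
            have h1 : ∑ j, C i j * (q j - r i) = ∑ j, (C i j * q j - C i j * r i) :=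
              Finset.sum_congr rfl fun j _ => by ring
            rw [h1, Finset.sum_sub_distrib, ← Finset.sum_mul, hrow, one_mul]
          calc ∑ i, ∑ j, C i j * (q j - r i) = ∑ i, ((∑ j, C i j * q j) - r i) :=
                Finset.sum_congr rfl fun i _ => e1 i
            _ = (∑ i, ∑ j, C i j * q j) - ∑ i, r i := by rw [Finset.sum_sub_distrib]
            _ = (∑ j, q j) - (∑ i, r i) := by
                congr 1
                rw [Finset.sum_comm]
                refine Finset.sum_congr rfl fun j _ => ?_
                rw [← Finset.sum_mul, hcol, one_mul]
      _ = 0 := by rw [hqs, hrs]; ring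
  calc (∑ i, r i * (-p * (∑ j, C i j * Real.log (l j)))) - ∑ i, r i * Real.log (r i)
      = ((∑ i, ∑ j, r i * C i j * Real.log (q j)) - ∑ i, r i * Real.log (r i))
          + Real.log S := by
        have e2 : ∑ i, r i * (-p * (∑ j, C i j * Real.log (l j)))
            = ∑ i, ((∑ j, r i * C i j * Real.log (q j)) + r i * Real.log S) :=
          Finset.sum_congr rfl fun i _ => expand i
        rw [e2, Finset.sum_add_distrib, ← Finset.sum_mul, hrs, one_mul]
        ring
    _ ≤ Real.log S := by linarith [klein]

end scalars

section matrixlemmas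
variable {n : ℕ}

private lemma quad_form (U : Matrix (Fin n) (Fin n) ℝ) (d u : Fin n → ℝ) :
    u ⬝ᵥ ((U * diagonal d * star U) *ᵥ u) = ∑ j, d j * ((star U *ᵥ u) j)^2 := by
  have hsU : star U = Uᵀ := by
    rw [Matrix.star_eq_conjTranspose, conjTranspose_eq_transpose_of_trivial]
  rw [hsU, ← mulVec_mulVec, ← mulVec_mulVec, dotProduct_mulVec, ← mulVec_transpose]
  simp [dotProduct, mulVec_diagonal, pow_two]
  exact Finset.sum_congr rfl fun j _ => by ring

private lemma coord_norm (U : Matrix (Fin n) (Fin n) ℝ) (hU : U * star U = 1) (u : Fin n → ℝ) :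
    ∑ j, ((star U *ᵥ u) j)^2 = u ⬝ᵥ u := by
  have h := quad_form U (fun _ => 1) u
  simp only [diagonal_one, mul_one, one_mul] at h
  rw [← h, hU, one_mulVec]

private lemma dot_coords (U : Matrix (Fin n) (Fin n) ℝ) (hU : U * star U = 1)
    (u v : Fin n → ℝ) : u ⬝ᵥ v = (star U *ᵥ u) ⬝ᵥ (star U *ᵥ v) := by
  have hsU : star U = Uᵀ := by
    rw [Matrix.star_eq_conjTranspose, conjTranspose_eq_transpose_of_trivial]
  conv_lhs => rw [← one_mulVec v, ← hU, ← mulVec_mulVec, dotProduct_mulVec]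
  rw [hsU, ← mulVec_transpose]

/-- real form of the spectral theorem -/
private lemma real_spectral {X : Matrix (Fin n) (Fin n) ℝ} (hX : X.IsHermitian) :
    X = (hX.eigenvectorUnitary : Matrix (Fin n) (Fin n) ℝ) * diagonal hX.eigenvalues *
      (star hX.eigenvectorUnitary : Matrix (Fin n) (Fin n) ℝ) := by
  have h := hX.spectral_theorem
  rw [Unitary.conjStarAlgAut_apply] at h
  exact h

private lemma quad_eq {X : Matrix (Fin n) (Fin n) ℝ} (hX : X.IsHermitian) (u : Fin n → ℝ) :
    u ⬝ᵥ (X *ᵥ u) = ∑ j, hX.eigenvalues j *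
      (((star hX.eigenvectorUnitary : Matrix (Fin n) (Fin n) ℝ) *ᵥ u) j)^2 := by
  conv_lhs => rw [real_spectral hX]
  exact quad_form _ _ u

private lemma row_sum_eq {X : Matrix (Fin n) (Fin n) ℝ} (hX : X.IsHermitian) (u : Fin n → ℝ) :
    ∑ j, (((star hX.eigenvectorUnitary : Matrix (Fin n) (Fin n) ℝ) *ᵥ u) j)^2 = u ⬝ᵥ u :=
  coord_norm _ (Unitary.coe_mul_star_self _) u

/-- column sums: for two unitaries U, V, the matrix of squares of (star U * V) is doubly
stochastic; column version. -/
private lemma col_sum_eq {X Z : Matrix (Fin n) (Fin n) ℝ} (hX : X.IsHermitian)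
    (hZ : Z.IsHermitian) (j : Fin n) :
    ∑ i, (((star hX.eigenvectorUnitary : Matrix (Fin n) (Fin n) ℝ) *ᵥ
      (fun k => (hZ.eigenvectorUnitary : Matrix (Fin n) (Fin n) ℝ) k i)) j)^2 = 1 := by
  set U := (hX.eigenvectorUnitary : Matrix (Fin n) (Fin n) ℝ)
  set V := (hZ.eigenvectorUnitary : Matrix (Fin n) (Fin n) ℝ)
  set M := star U * V with hM
  have hentry : ∀ i, ((star U) *ᵥ (fun k => V k i)) j = M j i := by
    intro i
    simp [hM, mulVec, mul_apply, dotProduct]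
  have hMM : M * star M = 1 := by
    have hVV : V * star V = 1 := Unitary.coe_mul_star_self _
    have hsUU : star U * U = 1 := Unitary.coe_star_mul_self _
    rw [hM, Matrix.star_mul, star_star, Matrix.mul_assoc,
      ← Matrix.mul_assoc V (star V) U, hVV, Matrix.one_mul, hsUU]
  have h1 : (M * star M) j j = 1 := by rw [hMM]; simp
  rw [mul_apply] at h1
  calc ∑ i, ((star U *ᵥ fun k => V k i) j)^2 = ∑ i, M j i * (star M) i j := by
        refine Finset.sum_congr rfl fun i _ => ?_
        rw [hentry i]
        simp [star_apply, pow_two]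
    _ = 1 := h1

private lemma inv_quad_upper {W : Matrix (Fin n) (Fin n) ℝ} (hW : W.IsHermitian)
    (hpos : ∀ j, 0 < hW.eigenvalues j) {s : ℝ} (hs : 0 < s) (u v : Fin n → ℝ) :
    2*(u ⬝ᵥ v) - (v ⬝ᵥ (W *ᵥ v) + s*(v ⬝ᵥ v)) ≤
    ∑ j, (((star hW.eigenvectorUnitary : Matrix (Fin n) (Fin n) ℝ) *ᵥ u) j)^2 *
      (hW.eigenvalues j + s)⁻¹ := by
  set U := (hW.eigenvectorUnitary : Matrix (Fin n) (Fin n) ℝ)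
  set bb := (star U) *ᵥ u with hbb
  set β := (star U) *ᵥ v with hβ
  have hUU : U * star U = 1 := Unitary.coe_mul_star_self _
  have h1 : u ⬝ᵥ v = ∑ j, bb j * β j := by
    rw [dot_coords U hUU u v]; rfl
  have h2 : v ⬝ᵥ (W *ᵥ v) = ∑ j, hW.eigenvalues j * (β j)^2 := quad_eq hW v
  have h3 : v ⬝ᵥ v = ∑ j, (β j)^2 := (row_sum_eq hW v).symm
  rw [h1, h2, h3]
  have expand : 2*(∑ j, bb j * β j) - ((∑ j, hW.eigenvalues j * (β j)^2) + s*(∑ j, (β j)^2))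
      = ∑ j, (2*(bb j * β j) - (hW.eigenvalues j + s) * (β j)^2) := by
    rw [Finset.mul_sum, Finset.mul_sum, ← Finset.sum_add_distrib, ← Finset.sum_sub_distrib]
    exact Finset.sum_congr rfl fun j _ => by ring
  rw [expand]
  refine Finset.sum_le_sum fun j _ => ?_
  have hls : 0 < hW.eigenvalues j + s := by linarith [hpos j]
  have key : (bb j)^2 * (hW.eigenvalues j + s)⁻¹ -
      (2*(bb j * β j) - (hW.eigenvalues j + s) * (β j)^2)
      = (bb j - (hW.eigenvalues j + s) * β j)^2 * (hW.eigenvalues j + s)⁻¹ := by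
    field_simp
    ring
  have hnn : 0 ≤ (bb j - (hW.eigenvalues j + s) * β j)^2 * (hW.eigenvalues j + s)⁻¹ := by
    positivity
  linarith [key, hnn]

private lemma trace_UDU (U : Matrix (Fin n) (Fin n) ℝ) (hU : star U * U = 1) (d : Fin n → ℝ) :
    (U * diagonal d * star U).trace = ∑ i, d i := by
  rw [Matrix.trace_mul_cycle, hU, Matrix.one_mul, trace_diagonal]

private lemma trace_sq {X : Matrix (Fin n) (Fin n) ℝ} (hX : X.IsHermitian) :
    (Xᵀ * X).trace = ∑ j, (hX.eigenvalues j)^2 := by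
  set U := (hX.eigenvectorUnitary : Matrix (Fin n) (Fin n) ℝ)
  set l := hX.eigenvalues
  have hT : Xᵀ = X := by
    rw [← conjTranspose_eq_transpose_of_trivial, hX.eq]
  have e := real_spectral hX
  have hstep : X * X = U * diagonal (fun j => l j * l j) * star U := by
    calc X * X = (U * diagonal l * star U) * (U * diagonal l * star U) := by rw [← e]
      _ = U * diagonal l * (star U * U) * diagonal l * star U := by
          simp only [Matrix.mul_assoc]
      _ = U * diagonal (fun j => l j * l j) * star U := by
          rw [Unitary.coe_star_mul_self, Matrix.mul_one]
          simp only [Matrix.mul_assoc]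
          rw [← Matrix.mul_assoc (diagonal l) (diagonal l), diagonal_mul_diagonal]
  rw [hT, hstep, trace_UDU U (Unitary.coe_star_mul_self _)]
  exact Finset.sum_congr rfl fun j _ => (pow_two _).symm

end matrixlemmas

set_option maxHeartbeats 1000000 in
private lemma abstract_core {n : ℕ} (hn : 0 < n) (p α κ : ℝ)
    (hp : 0 < p) (hα : 0 < α) (hκ : 1 ≤ κ)
    (lX lY lZ : Fin n → ℝ)
    (CX CY : Fin n → Fin n → ℝ)
    (a b : ℝ) (ha : 0 ≤ a) (hb : 0 ≤ b) (hab : a + b = 1)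
    (hlX : ∀ j, lX j ∈ Set.Ioc 0 α) (hlY : ∀ j, lY j ∈ Set.Ioc 0 α)
    (hlZ : ∀ j, lZ j ∈ Set.Ioc 0 α)
    (hκZ : ∀ i j, lZ i ≤ κ * lZ j)
    (hCX0 : ∀ i j, 0 ≤ CX i j) (hCY0 : ∀ i j, 0 ≤ CY i j)
    (hrowX : ∀ i, ∑ j, CX i j = 1) (hrowY : ∀ i, ∑ j, CY i j = 1)
    (hcolX : ∀ j, ∑ i, CX i j = 1) (hcolY : ∀ j, ∑ i, CY i j = 1)
    (hkey : ∀ i, ∀ s : ℝ, 0 < s → (lZ i + s)⁻¹ ≤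
        a * ∑ j, CX i j * (lX j + s)⁻¹ + b * ∑ j, CY i j * (lY j + s)⁻¹)
    (hmix : ∀ i, lZ i = a * (∑ j, CX i j * lX j) + b * (∑ j, CY i j * lY j)) :
    Real.log (∑ i, lZ i ^ (-p)) - p / ((n : ℝ) * κ ^ p * α ^ 2) / 2 * (∑ i, (lZ i)^2)
      ≤ a * (Real.log (∑ j, lX j ^ (-p)) - p / ((n : ℝ) * κ ^ p * α ^ 2) / 2 * (∑ j, (lX j)^2))
      + b * (Real.log (∑ j, lY j ^ (-p)) - p / ((n : ℝ) * κ ^ p * α ^ 2) / 2 * (∑ j, (lY j)^2)) := by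
  haveI : Nonempty (Fin n) := Fin.pos_iff_nonempty.mp hn
  have hn' : (0:ℝ) < n := by exact_mod_cast hn
  have hκ0 : (0:ℝ) < κ := lt_of_lt_of_le one_pos hκ
  have hκp : (0:ℝ) < κ ^ p := Real.rpow_pos_of_pos hκ0 _
  set μ : ℝ := p / ((n : ℝ) * κ ^ p * α ^ 2) with hμdef
  set c : ℝ := ((n:ℝ) * κ ^ p)⁻¹ with hcdef
  have hc0 : 0 < c := by rw [hcdef]; positivity
  have hμ0 : 0 < μ := by rw [hμdef]; positivity
  have hμα : μ * α ^ 2 = p * c := by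
    rw [hμdef, hcdef]; field_simp
  -- the Gibbs state of Z
  set T : ℝ := ∑ i, lZ i ^ (-p) with hTdef
  have hT0 : 0 < T := Finset.sum_pos (fun i _ => Real.rpow_pos_of_pos (hlZ i).1 _)
    Finset.univ_nonempty
  set r : Fin n → ℝ := fun i => lZ i ^ (-p) / T with hrdef
  have hr0 : ∀ i, 0 < r i := fun i => div_pos (Real.rpow_pos_of_pos (hlZ i).1 _) hT0
  have hrs : ∑ i, r i = 1 := by
    rw [hrdef, ← Finset.sum_div, ← hTdef, div_self hT0.ne']
  have hrc : ∀ i, c ≤ r i := by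
    intro i
    have hxpos : (0:ℝ) < lZ i ^ (-p) := Real.rpow_pos_of_pos (hlZ i).1 _
    have hbound : ∀ ℓ, lZ ℓ ^ (-p) ≤ κ ^ p * lZ i ^ (-p) := by
      intro ℓ
      have h1 : lZ i ^ p ≤ (κ * lZ ℓ) ^ p :=
        Real.rpow_le_rpow (hlZ i).1.le (hκZ i ℓ) hp.le
      have h2 : (κ * lZ ℓ) ^ p = κ ^ p * lZ ℓ ^ p :=
        Real.mul_rpow hκ0.le (hlZ ℓ).1.le
      have h3 : (0:ℝ) < lZ i ^ p := Real.rpow_pos_of_pos (hlZ i).1 _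
      have h4 : (0:ℝ) < lZ ℓ ^ p := Real.rpow_pos_of_pos (hlZ ℓ).1 _
      rw [Real.rpow_neg (hlZ ℓ).1.le, Real.rpow_neg (hlZ i).1.le,
        ← div_eq_mul_inv, inv_eq_one_div, div_le_div_iff₀ h4 h3]
      nlinarith [h1, h2]
    have hTle : T ≤ (n:ℝ) * κ ^ p * (lZ i ^ (-p)) := by
      calc T = ∑ ℓ, lZ ℓ ^ (-p) := hTdef
        _ ≤ ∑ _ℓ : Fin n, κ ^ p * lZ i ^ (-p) := Finset.sum_le_sum fun ℓ _ => hbound ℓ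
        _ = (n:ℝ) * κ ^ p * (lZ i ^ (-p)) := by
            rw [Finset.sum_const, Finset.card_univ, Fintype.card_fin, nsmul_eq_mul]
            ring
    have step : lZ i ^ (-p) / ((n:ℝ) * κ ^ p * (lZ i ^ (-p))) ≤ r i := by
      rw [hrdef]
      exact div_le_div_of_nonneg_left hxpos.le hT0 hTle
    have heq : lZ i ^ (-p) / ((n:ℝ) * κ ^ p * (lZ i ^ (-p))) = c := by
      rw [hcdef]
      field_simp
    rw [← heq]
    exact step
  -- operator convexity of -log, averaged
  have opcvx : ∀ i, -Real.log (lZ i) ≤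
      a * (∑ j, CX i j * (-Real.log (lX j))) + b * (∑ j, CY i j * (-Real.log (lY j))) := by
    intro i
    exact neg_log_cvx lX lY (fun j => (hlX j).1) (fun j => (hlY j).1) (CX i) (CY i)
      (hrowX i) (hrowY i) a b hab (lZ i) (hlZ i).1 (hkey i)
  have C1 : ∑ i, (r i - c) * p * (-Real.log (lZ i)) ≤
      a * ∑ i, (r i - c) * p * (∑ j, CX i j * (-Real.log (lX j)))
      + b * ∑ i, (r i - c) * p * (∑ j, CY i j * (-Real.log (lY j))) := by
    have step1 : ∑ i, (r i - c) * p * (-Real.log (lZ i)) ≤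
        ∑ i, (r i - c) * p * (a * (∑ j, CX i j * (-Real.log (lX j)))
          + b * (∑ j, CY i j * (-Real.log (lY j)))) := by
      refine Finset.sum_le_sum fun i _ => ?_
      have hco : 0 ≤ (r i - c) * p := mul_nonneg (by linarith [hrc i]) hp.le
      exact mul_le_mul_of_nonneg_left (opcvx i) hco
    have step2 : ∑ i, (r i - c) * p * (a * (∑ j, CX i j * (-Real.log (lX j)))
          + b * (∑ j, CY i j * (-Real.log (lY j))))
        = a * ∑ i, (r i - c) * p * (∑ j, CX i j * (-Real.log (lX j)))
          + b * ∑ i, (r i - c) * p * (∑ j, CY i j * (-Real.log (lY j))) := by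
      rw [Finset.mul_sum, Finset.mul_sum, ← Finset.sum_add_distrib]
      exact Finset.sum_congr rfl fun i _ => by ring
    linarith [step1, step2]
  -- Peierls / trace of convex function
  set ψ : ℝ → ℝ := fun x => -(c*p) * Real.log x - (μ/2) * x^2 with hψdef
  have hψ : ConvexOn ℝ (Set.Ioc 0 α) ψ := by
    rw [hψdef]
    refine psi_convex hα (by positivity) ?_
    have : 2 * (μ/2) * α^2 = μ * α^2 := by ring
    rw [this, hμα]; linarith
  have peierls : ∑ i, ψ (lZ i) ≤ a * ∑ j, ψ (lX j) + b * ∑ j, ψ (lY j) := by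
    have h1 : ∀ i, ψ (lZ i) ≤ a * (∑ j, CX i j * ψ (lX j)) + b * (∑ j, CY i j * ψ (lY j)) := by
      intro i
      have memX : (∑ j, CX i j * lX j) ∈ Set.Ioc (0:ℝ) α := by
        have := (convex_Ioc (0:ℝ) α).sum_mem (t := Finset.univ)
          (fun j _ => hCX0 i j) (hrowX i) (fun j _ => hlX j)
        simpa [smul_eq_mul] using this
      have memY : (∑ j, CY i j * lY j) ∈ Set.Ioc (0:ℝ) α := by
        have := (convex_Ioc (0:ℝ) α).sum_mem (t := Finset.univ)
          (fun j _ => hCY0 i j) (hrowY i) (fun j _ => hlY j)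
        simpa [smul_eq_mul] using this
      have e1 : ψ (lZ i) = ψ (a • (∑ j, CX i j * lX j) + b • (∑ j, CY i j * lY j)) := by
        rw [hmix i]; simp [smul_eq_mul]
      have e2 := hψ.2 memX memY ha hb hab
      have e3 : ψ (∑ j, CX i j * lX j) ≤ ∑ j, CX i j * ψ (lX j) := by
        have := hψ.map_sum_le (t := Finset.univ) (fun j _ => hCX0 i j) (hrowX i)
          (fun j _ => hlX j)
        simpa [smul_eq_mul] using this
      have e4 : ψ (∑ j, CY i j * lY j) ≤ ∑ j, CY i j * ψ (lY j) := by
        have := hψ.map_sum_le (t := Finset.univ) (fun j _ => hCY0 i j) (hrowY i)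
          (fun j _ => hlY j)
        simpa [smul_eq_mul] using this
      calc ψ (lZ i) = ψ (a • (∑ j, CX i j * lX j) + b • (∑ j, CY i j * lY j)) := e1
        _ ≤ a * ψ (∑ j, CX i j * lX j) + b * ψ (∑ j, CY i j * lY j) := by
            simpa [smul_eq_mul] using e2
        _ ≤ a * (∑ j, CX i j * ψ (lX j)) + b * (∑ j, CY i j * ψ (lY j)) := by
            have := mul_le_mul_of_nonneg_left e3 ha
            have := mul_le_mul_of_nonneg_left e4 hb
            gcongr
    have h2 : ∑ i, ψ (lZ i) ≤
        ∑ i, (a * (∑ j, CX i j * ψ (lX j)) + b * (∑ j, CY i j * ψ (lY j))) :=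
      Finset.sum_le_sum fun i _ => h1 i
    have h3 : ∑ i, ∑ j, CX i j * ψ (lX j) = ∑ j, ψ (lX j) := by
      rw [Finset.sum_comm]
      refine Finset.sum_congr rfl fun j _ => ?_
      rw [← Finset.sum_mul, hcolX, one_mul]
    have h4 : ∑ i, ∑ j, CY i j * ψ (lY j) = ∑ j, ψ (lY j) := by
      rw [Finset.sum_comm]
      refine Finset.sum_congr rfl fun j _ => ?_
      rw [← Finset.sum_mul, hcolY, one_mul]
    have h5 : ∑ i, (a * (∑ j, CX i j * ψ (lX j)) + b * (∑ j, CY i j * ψ (lY j)))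
        = a * ∑ j, ψ (lX j) + b * ∑ j, ψ (lY j) := by
      rw [Finset.sum_add_distrib, ← Finset.mul_sum, ← Finset.mul_sum, h3, h4]
    linarith [h2, h5]
  -- exact value of log T
  have stepA : Real.log T = (∑ i, r i * (-p * Real.log (lZ i))) - ∑ i, r i * Real.log (r i) := by
    have hlog : ∀ i, Real.log (r i) = -p * Real.log (lZ i) - Real.log T := by
      intro i
      rw [hrdef]
      simp only
      rw [Real.log_div (Real.rpow_pos_of_pos (hlZ i).1 _).ne' hT0.ne',
        Real.log_rpow (hlZ i).1]
    have e1 : ∑ i, r i * Real.log (r i)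
        = (∑ i, r i * (-p * Real.log (lZ i))) - (∑ i, r i) * Real.log T := by
      rw [Finset.sum_mul, ← Finset.sum_sub_distrib]
      refine Finset.sum_congr rfl fun i _ => ?_
      rw [hlog i]; ring
    rw [e1, hrs, one_mul]; ring
  -- rearrangement identities
  have combine1 : (∑ i, r i * (-p * Real.log (lZ i))) - μ/2 * (∑ i, (lZ i)^2)
      = (∑ i, (r i - c) * p * (-Real.log (lZ i))) + ∑ i, ψ (lZ i) := by
    rw [hψdef, Finset.mul_sum, ← Finset.sum_sub_distrib, ← Finset.sum_add_distrib]
    refine Finset.sum_congr rfl fun i _ => ?_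
    simp only
    ring
  have hsumLX : ∑ i, ∑ j, CX i j * Real.log (lX j) = ∑ j, Real.log (lX j) := by
    rw [Finset.sum_comm]
    refine Finset.sum_congr rfl fun j _ => ?_
    rw [← Finset.sum_mul, hcolX, one_mul]
  have hsumLY : ∑ i, ∑ j, CY i j * Real.log (lY j) = ∑ j, Real.log (lY j) := by
    rw [Finset.sum_comm]
    refine Finset.sum_congr rfl fun j _ => ?_
    rw [← Finset.sum_mul, hcolY, one_mul]
  have negsumX : ∀ i, ∑ j, CX i j * (-Real.log (lX j)) = -∑ j, CX i j * Real.log (lX j) := by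
    intro i
    rw [← Finset.sum_neg_distrib]
    exact Finset.sum_congr rfl fun j _ => by ring
  have negsumY : ∀ i, ∑ j, CY i j * (-Real.log (lY j)) = -∑ j, CY i j * Real.log (lY j) := by
    intro i
    rw [← Finset.sum_neg_distrib]
    exact Finset.sum_congr rfl fun j _ => by ring
  have combineX : (∑ i, (r i - c) * p * (∑ j, CX i j * (-Real.log (lX j)))) + ∑ j, ψ (lX j)
      = (∑ i, r i * (-p * (∑ j, CX i j * Real.log (lX j)))) - μ/2 * (∑ j, (lX j)^2) := by
    have e1 : ∑ i, (r i - c) * p * (∑ j, CX i j * (-Real.log (lX j)))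
        = (∑ i, r i * (-p * (∑ j, CX i j * Real.log (lX j))))
          + c * p * (∑ i, ∑ j, CX i j * Real.log (lX j)) := by
      rw [Finset.mul_sum, ← Finset.sum_add_distrib]
      refine Finset.sum_congr rfl fun i _ => ?_
      rw [negsumX i]; ring
    have e2 : ∑ j, ψ (lX j)
        = -(c*p) * (∑ j, Real.log (lX j)) - μ/2 * (∑ j, (lX j)^2) := by
      rw [hψdef, Finset.mul_sum, Finset.mul_sum, ← Finset.sum_sub_distrib]
      try exact Finset.sum_congr rfl fun j _ => by simp only; ring
    rw [e1, e2, hsumLX]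
    ring
  have combineY : (∑ i, (r i - c) * p * (∑ j, CY i j * (-Real.log (lY j)))) + ∑ j, ψ (lY j)
      = (∑ i, r i * (-p * (∑ j, CY i j * Real.log (lY j)))) - μ/2 * (∑ j, (lY j)^2) := by
    have e1 : ∑ i, (r i - c) * p * (∑ j, CY i j * (-Real.log (lY j)))
        = (∑ i, r i * (-p * (∑ j, CY i j * Real.log (lY j))))
          + c * p * (∑ i, ∑ j, CY i j * Real.log (lY j)) := by
      rw [Finset.mul_sum, ← Finset.sum_add_distrib]
      refine Finset.sum_congr rfl fun i _ => ?_
      rw [negsumY i]; ring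
    have e2 : ∑ j, ψ (lY j)
        = -(c*p) * (∑ j, Real.log (lY j)) - μ/2 * (∑ j, (lY j)^2) := by
      rw [hψdef, Finset.mul_sum, Finset.mul_sum, ← Finset.sum_sub_distrib]
      try exact Finset.sum_congr rfl fun j _ => by simp only; ring
    rw [e1, e2, hsumLY]
    ring
  -- Gibbs inequalities
  have gibbsX := gibbs hn p lX (fun j => (hlX j).1) r hr0 hrs CX hCX0 hrowX hcolX
  have gibbsY := gibbs hn p lY (fun j => (hlY j).1) r hr0 hrs CY hCY0 hrowY hcolY
  -- final assembly
  have L5a := mul_le_mul_of_nonneg_left gibbsX ha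
  have L5b := mul_le_mul_of_nonneg_left gibbsY hb
  have hsplit : a * (∑ i, r i * Real.log (r i)) + b * (∑ i, r i * Real.log (r i))
      = ∑ i, r i * Real.log (r i) := by
    linear_combination (∑ i, r i * Real.log (r i)) * hab
  calc Real.log T - μ/2 * (∑ i, (lZ i)^2)
      = ((∑ i, (r i - c) * p * (-Real.log (lZ i))) + ∑ i, ψ (lZ i))
        - ∑ i, r i * Real.log (r i) := by linarith [stepA, combine1]
    _ ≤ ((a * ∑ i, (r i - c) * p * (∑ j, CX i j * (-Real.log (lX j)))
          + b * ∑ i, (r i - c) * p * (∑ j, CY i j * (-Real.log (lY j))))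
          + (a * ∑ j, ψ (lX j) + b * ∑ j, ψ (lY j)))
        - (a * (∑ i, r i * Real.log (r i)) + b * (∑ i, r i * Real.log (r i))) := by
        linarith [C1, peierls, hsplit]
    _ = a * (((∑ i, (r i - c) * p * (∑ j, CX i j * (-Real.log (lX j)))) + ∑ j, ψ (lX j))
          - ∑ i, r i * Real.log (r i))
        + b * (((∑ i, (r i - c) * p * (∑ j, CY i j * (-Real.log (lY j)))) + ∑ j, ψ (lY j))
          - ∑ i, r i * Real.log (r i)) := by ring
    _ = a * ((∑ i, r i * (-p * (∑ j, CX i j * Real.log (lX j))))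
            - ∑ i, r i * Real.log (r i) - μ/2 * (∑ j, (lX j)^2))
        + b * ((∑ i, r i * (-p * (∑ j, CY i j * Real.log (lY j))))
            - ∑ i, r i * Real.log (r i) - μ/2 * (∑ j, (lY j)^2)) := by
        linear_combination a * combineX + b * combineY
    _ ≤ a * (Real.log (∑ j, lX j ^ (-p)) - μ/2 * (∑ j, (lX j)^2))
        + b * (Real.log (∑ j, lY j ^ (-p)) - μ/2 * (∑ j, (lY j)^2)) := by
        nlinarith [L5a, L5b]
    _ = a * (Real.log (∑ j, lX j ^ (-p)) - μ / 2 * (∑ j, (lX j)^2))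
        + b * (Real.log (∑ j, lY j ^ (-p)) - μ / 2 * (∑ j, (lY j)^2)) := by ring

private lemma eigMax_herm {n : ℕ} {X : Matrix (Fin n) (Fin n) ℝ} (hX : X.IsHermitian) :
    eigMax X = ⨆ i, hX.eigenvalues i := by
  rw [eigMax, dif_pos hX]

private lemma eigMin_herm {n : ℕ} {X : Matrix (Fin n) (Fin n) ℝ} (hX : X.IsHermitian) :
    eigMin X = ⨅ i, hX.eigenvalues i := by
  rw [eigMin, dif_pos hX]

private lemma le_eigMax {n : ℕ} [Nonempty (Fin n)] {X : Matrix (Fin n) (Fin n) ℝ}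
    (hX : X.IsHermitian) (i : Fin n) : hX.eigenvalues i ≤ eigMax X := by
  rw [eigMax_herm hX]
  exact le_ciSup (Set.Finite.bddAbove (Set.finite_range _)) i

private lemma eigMin_le {n : ℕ} [Nonempty (Fin n)] {X : Matrix (Fin n) (Fin n) ℝ}
    (hX : X.IsHermitian) (i : Fin n) : eigMin X ≤ hX.eigenvalues i := by
  rw [eigMin_herm hX]
  exact ciInf_le (Set.Finite.bddBelow (Set.finite_range _)) i

private lemma eigMax_le {n : ℕ} [Nonempty (Fin n)] {X : Matrix (Fin n) (Fin n) ℝ}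
    (hX : X.IsHermitian) {m : ℝ} (h : ∀ i, hX.eigenvalues i ≤ m) : eigMax X ≤ m := by
  rw [eigMax_herm hX]
  exact ciSup_le h

private lemma le_eigMin {n : ℕ} [Nonempty (Fin n)] {X : Matrix (Fin n) (Fin n) ℝ}
    (hX : X.IsHermitian) {m : ℝ} (h : ∀ i, m ≤ hX.eigenvalues i) : m ≤ eigMin X := by
  rw [eigMin_herm hX]
  exact le_ciInf h

private lemma eig_facts {n : ℕ} [Nonempty (Fin n)] {α κ : ℝ} (hκ0 : 0 ≤ κ)
    {W : Matrix (Fin n) (Fin n) ℝ} (hW : W.PosDef)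
    (hmax : eigMax W ≤ α) (hcond : eigMax W ≤ κ * eigMin W) :
    (∀ j, hW.1.eigenvalues j ∈ Set.Ioc 0 α) ∧
    (∀ i j, hW.1.eigenvalues i ≤ κ * hW.1.eigenvalues j) := by
  constructor
  · intro j
    exact ⟨hW.eigenvalues_pos j, le_trans (le_eigMax hW.1 j) hmax⟩
  · intro i j
    calc hW.1.eigenvalues i ≤ eigMax W := le_eigMax hW.1 i
      _ ≤ κ * eigMin W := hcond
      _ ≤ κ * hW.1.eigenvalues j := mul_le_mul_of_nonneg_left (eigMin_le hW.1 j) hκ0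

/-- `k(X) = log(Tr(X^{−p}))` is `μ`-strongly convex w.r.t. the Frobenius
norm on `𝒟 = {X ≻ 0 : λ_max(X) ≤ α, λ_max(X) ≤ κ·λ_min(X)}` with `μ = p/(n κ^p α²)`:
the function `X ↦ log(Tr(X^{−p})) − (μ/2)·‖X‖_F²` (where `‖X‖_F² = Tr(Xᵀ X)`) is convex
on `𝒟`. -/
theorem log_trace_power_strongly_convex (n : ℕ) (p α κ : ℝ)
    (hp : 0 < p) (hα : 0 < α) (hκ : 1 ≤ κ) :
    ConvexOn ℝ
      {X : Matrix (Fin n) (Fin n) ℝ | X.PosDef ∧ eigMax X ≤ α ∧ eigMax X ≤ κ * eigMin X}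
      (fun X => Real.log (mpow X (-p)).trace -
        p / ((n : ℝ) * κ ^ p * α ^ 2) / 2 * (Xᵀ * X).trace) := by
  classical
  set f : Matrix (Fin n) (Fin n) ℝ → ℝ := fun X => Real.log (mpow X (-p)).trace -
        p / ((n : ℝ) * κ ^ p * α ^ 2) / 2 * (Xᵀ * X).trace with hfdef
  rcases Nat.eq_zero_or_pos n with hn0 | hn
  · subst hn0
    have hsub : ∀ A B : Matrix (Fin 0) (Fin 0) ℝ, A = B := by
      intro A B; ext i j; exact i.elim0
    constructor
    · intro X hX Y hY a b ha hb hab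
      rw [hsub (a • X + b • Y) X]
      exact hX
    · intro X hX Y hY a b ha hb hab
      rw [hsub (a • X + b • Y) X, hsub Y X]
      rw [smul_eq_mul, smul_eq_mul, ← add_mul, hab, one_mul]
  haveI : Nonempty (Fin n) := Fin.pos_iff_nonempty.mp hn
  have hκ0 : (0:ℝ) < κ := lt_of_lt_of_le one_pos hκ
  -- master step
  have master : ∀ X, (X.PosDef ∧ eigMax X ≤ α ∧ eigMax X ≤ κ * eigMin X) →
      ∀ Y, (Y.PosDef ∧ eigMax Y ≤ α ∧ eigMax Y ≤ κ * eigMin Y) →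
      ∀ a b : ℝ, 0 ≤ a → 0 ≤ b → a + b = 1 →
      (((a • X + b • Y).PosDef ∧ eigMax (a • X + b • Y) ≤ α ∧
        eigMax (a • X + b • Y) ≤ κ * eigMin (a • X + b • Y)) ∧
       f (a • X + b • Y) ≤ a * f X + b * f Y) := by
    intro X hX Y hY a b ha hb hab
    obtain ⟨hXpd, hXmax, hXcond⟩ := hX
    obtain ⟨hYpd, hYmax, hYcond⟩ := hY
    set Z := a • X + b • Y with hZdef
    -- Z is positive definite
    have hZpd : Z.PosDef := by
      refine posDef_iff_dotProduct_mulVec.mpr ⟨?_, ?_⟩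
      · show Zᴴ = Z
        rw [hZdef, conjTranspose_add, conjTranspose_smul, conjTranspose_smul,
          hXpd.1.eq, hYpd.1.eq]
        simp
      · intro x hx
        have qX := hXpd.dotProduct_mulVec_pos hx
        have qY := hYpd.dotProduct_mulVec_pos hx
        have hsplit : star x ⬝ᵥ (Z *ᵥ x)
            = a * (star x ⬝ᵥ (X *ᵥ x)) + b * (star x ⬝ᵥ (Y *ᵥ x)) := by
          rw [hZdef, add_mulVec, smul_mulVec, smul_mulVec, dotProduct_add,
            dotProduct_smul, dotProduct_smul, smul_eq_mul, smul_eq_mul]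
        rw [hsplit]
        rcases lt_or_eq_of_le ha with hapos | haeq
        · have h1 : 0 < a * (star x ⬝ᵥ (X *ᵥ x)) := mul_pos hapos qX
          have h2 : 0 ≤ b * (star x ⬝ᵥ (Y *ᵥ x)) := mul_nonneg hb qY.le
          linarith
        · have hb1 : b = 1 := by linarith [hab, haeq]
          rw [← haeq, hb1]
          simpa using qY
    have hZher : Z.IsHermitian := hZpd.1
    set lX := hXpd.1.eigenvalues with hlXdef
    set lY := hYpd.1.eigenvalues with hlYdef
    set lZ := hZher.eigenvalues with hlZdef
    -- eigenvectors of Z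
    set u : Fin n → (Fin n → ℝ) := fun i => ⇑(hZher.eigenvectorBasis i) with hudef
    have hu1 : ∀ i, ((star hZher.eigenvectorUnitary : Matrix (Fin n) (Fin n) ℝ) *ᵥ u i)
        = Pi.single i 1 := fun i => hZher.star_eigenvectorUnitary_mulVec i
    have hunorm : ∀ i, u i ⬝ᵥ u i = 1 := by
      intro i
      rw [← row_sum_eq hZher (u i), hu1 i]
      rw [Finset.sum_eq_single i]
      · simp
      · intro j _ hji
        simp [Pi.single_apply, hji]
      · intro h
        exact absurd (Finset.mem_univ i) h
    have hZu : ∀ i, Z *ᵥ u i = lZ i • u i := fun i => hZher.mulVec_eigenvectorBasis i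
    have hlZval : ∀ i, u i ⬝ᵥ (Z *ᵥ u i) = lZ i := by
      intro i
      rw [hZu i, dotProduct_smul, hunorm i, smul_eq_mul, mul_one]
    -- doubly stochastic coefficients
    set CX : Fin n → Fin n → ℝ := fun i j =>
      (((star hXpd.1.eigenvectorUnitary : Matrix (Fin n) (Fin n) ℝ) *ᵥ u i) j)^2 with hCXdef
    set CY : Fin n → Fin n → ℝ := fun i j =>
      (((star hYpd.1.eigenvectorUnitary : Matrix (Fin n) (Fin n) ℝ) *ᵥ u i) j)^2 with hCYdef
    have hCX0 : ∀ i j, 0 ≤ CX i j := fun i j => sq_nonneg _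
    have hCY0 : ∀ i j, 0 ≤ CY i j := fun i j => sq_nonneg _
    have hrowX : ∀ i, ∑ j, CX i j = 1 := by
      intro i
      rw [hCXdef]
      simp only
      rw [row_sum_eq hXpd.1 (u i), hunorm i]
    have hrowY : ∀ i, ∑ j, CY i j = 1 := by
      intro i
      rw [hCYdef]
      simp only
      rw [row_sum_eq hYpd.1 (u i), hunorm i]
    have hueq : ∀ i, u i = fun k => (hZher.eigenvectorUnitary : Matrix (Fin n) (Fin n) ℝ) k i := by
      intro i
      funext k
      simp [hudef]
    have hcolX : ∀ j, ∑ i, CX i j = 1 := by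
      intro j
      have h := col_sum_eq hXpd.1 hZher j
      rw [hCXdef]
      simp only
      calc ∑ i, (((star hXpd.1.eigenvectorUnitary : Matrix (Fin n) (Fin n) ℝ) *ᵥ u i) j)^2
          = ∑ i, (((star hXpd.1.eigenvectorUnitary : Matrix (Fin n) (Fin n) ℝ) *ᵥ
            (fun k => (hZher.eigenvectorUnitary : Matrix (Fin n) (Fin n) ℝ) k i)) j)^2 := by
            refine Finset.sum_congr rfl fun i _ => ?_
            rw [← hueq i]
        _ = 1 := h
    have hcolY : ∀ j, ∑ i, CY i j = 1 := by
      intro j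
      have h := col_sum_eq hYpd.1 hZher j
      rw [hCYdef]
      simp only
      calc ∑ i, (((star hYpd.1.eigenvectorUnitary : Matrix (Fin n) (Fin n) ℝ) *ᵥ u i) j)^2
          = ∑ i, (((star hYpd.1.eigenvectorUnitary : Matrix (Fin n) (Fin n) ℝ) *ᵥ
            (fun k => (hZher.eigenvectorUnitary : Matrix (Fin n) (Fin n) ℝ) k i)) j)^2 := by
            refine Finset.sum_congr rfl fun i _ => ?_
            rw [← hueq i]
        _ = 1 := h
    -- quadratic forms
    have quadX : ∀ i, u i ⬝ᵥ (X *ᵥ u i) = ∑ j, CX i j * lX j := by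
      intro i
      rw [quad_eq hXpd.1 (u i)]
      exact Finset.sum_congr rfl fun j _ => by rw [hCXdef]; ring
    have quadY : ∀ i, u i ⬝ᵥ (Y *ᵥ u i) = ∑ j, CY i j * lY j := by
      intro i
      rw [quad_eq hYpd.1 (u i)]
      exact Finset.sum_congr rfl fun j _ => by rw [hCYdef]; ring
    have hZQsplit : ∀ v : Fin n → ℝ, v ⬝ᵥ (Z *ᵥ v)
        = a * (v ⬝ᵥ (X *ᵥ v)) + b * (v ⬝ᵥ (Y *ᵥ v)) := by
      intro v
      rw [hZdef, add_mulVec, smul_mulVec, smul_mulVec, dotProduct_add,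
        dotProduct_smul, dotProduct_smul, smul_eq_mul, smul_eq_mul]
    have hmix : ∀ i, lZ i = a * (∑ j, CX i j * lX j) + b * (∑ j, CY i j * lY j) := by
      intro i
      rw [← quadX i, ← quadY i, ← hZQsplit (u i), hlZval i]
    -- the key resolvent inequality
    have hkey : ∀ i, ∀ s : ℝ, 0 < s → (lZ i + s)⁻¹ ≤
        a * ∑ j, CX i j * (lX j + s)⁻¹ + b * ∑ j, CY i j * (lY j + s)⁻¹ := by
      intro i s hs
      have hlZpos : 0 < lZ i := hZpd.eigenvalues_pos i
      have hlZs : 0 < lZ i + s := by linarith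
      set q : ℝ := (lZ i + s)⁻¹ with hqdef
      set v : Fin n → ℝ := q • u i with hvdef
      have huv : u i ⬝ᵥ v = q := by
        rw [hvdef, dotProduct_smul, hunorm i, smul_eq_mul, mul_one]
      have hvv : v ⬝ᵥ v = q^2 := by
        rw [hvdef, smul_dotProduct, dotProduct_smul, hunorm i, smul_eq_mul, smul_eq_mul]
        ring
      have hZq : v ⬝ᵥ (Z *ᵥ v) = q^2 * lZ i := by
        rw [hvdef, mulVec_smul, hZu i, smul_dotProduct, dotProduct_smul, dotProduct_smul,
          hunorm i]
        simp [smul_eq_mul]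
        ring
      have hZsplit := hZQsplit v
      have hqq : (lZ i + s) * q = 1 := mul_inv_cancel₀ hlZs.ne'
      have hIX := inv_quad_upper hXpd.1 (fun j => hXpd.eigenvalues_pos j) hs (u i) v
      have hIY := inv_quad_upper hYpd.1 (fun j => hYpd.eigenvalues_pos j) hs (u i) v
      have haX := mul_le_mul_of_nonneg_left hIX ha
      have haY := mul_le_mul_of_nonneg_left hIY hb
      have hqval : q = a * (2*(u i ⬝ᵥ v) - (v ⬝ᵥ (X *ᵥ v) + s*(v ⬝ᵥ v)))
          + b * (2*(u i ⬝ᵥ v) - (v ⬝ᵥ (Y *ᵥ v) + s*(v ⬝ᵥ v))) := by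
        rw [huv, hvv]
        linear_combination -hZsplit + hZq + q * hqq + (s*q^2 - 2*q) * hab
      have hsumX : ∑ j, (((star hXpd.1.eigenvectorUnitary : Matrix (Fin n) (Fin n) ℝ) *ᵥ u i) j)^2
          * (lX j + s)⁻¹ = ∑ j, CX i j * (lX j + s)⁻¹ := by
        exact Finset.sum_congr rfl fun j _ => by rw [hCXdef]
      have hsumY : ∑ j, (((star hYpd.1.eigenvectorUnitary : Matrix (Fin n) (Fin n) ℝ) *ᵥ u i) j)^2
          * (lY j + s)⁻¹ = ∑ j, CY i j * (lY j + s)⁻¹ := by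
        exact Finset.sum_congr rfl fun j _ => by rw [hCYdef]
      rw [hsumX] at haX
      rw [hsumY] at haY
      rw [hqval]
      linarith [haX, haY]
    -- eigenvalue facts
    have eigX := eig_facts hκ0.le hXpd hXmax hXcond
    have eigY := eig_facts hκ0.le hYpd hYmax hYcond
    -- membership of Z
    have hzX_le : ∀ i, ∑ j, CX i j * lX j ≤ eigMax X := by
      intro i
      calc ∑ j, CX i j * lX j ≤ ∑ j, CX i j * eigMax X :=
            Finset.sum_le_sum fun j _ =>
              mul_le_mul_of_nonneg_left (le_eigMax hXpd.1 j) (hCX0 i j)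
        _ = eigMax X := by rw [← Finset.sum_mul, hrowX i, one_mul]
    have hzY_le : ∀ i, ∑ j, CY i j * lY j ≤ eigMax Y := by
      intro i
      calc ∑ j, CY i j * lY j ≤ ∑ j, CY i j * eigMax Y :=
            Finset.sum_le_sum fun j _ =>
              mul_le_mul_of_nonneg_left (le_eigMax hYpd.1 j) (hCY0 i j)
        _ = eigMax Y := by rw [← Finset.sum_mul, hrowY i, one_mul]
    have hzX_ge : ∀ i, eigMin X ≤ ∑ j, CX i j * lX j := by
      intro i
      calc eigMin X = ∑ j, CX i j * eigMin X := by rw [← Finset.sum_mul, hrowX i, one_mul]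
        _ ≤ ∑ j, CX i j * lX j :=
            Finset.sum_le_sum fun j _ =>
              mul_le_mul_of_nonneg_left (eigMin_le hXpd.1 j) (hCX0 i j)
    have hzY_ge : ∀ i, eigMin Y ≤ ∑ j, CY i j * lY j := by
      intro i
      calc eigMin Y = ∑ j, CY i j * eigMin Y := by rw [← Finset.sum_mul, hrowY i, one_mul]
        _ ≤ ∑ j, CY i j * lY j :=
            Finset.sum_le_sum fun j _ =>
              mul_le_mul_of_nonneg_left (eigMin_le hYpd.1 j) (hCY0 i j)
    have hlZ_le : ∀ i, lZ i ≤ a * eigMax X + b * eigMax Y := by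
      intro i
      rw [hmix i]
      have h1 := mul_le_mul_of_nonneg_left (hzX_le i) ha
      have h2 := mul_le_mul_of_nonneg_left (hzY_le i) hb
      linarith
    have hlZ_ge : ∀ i, a * eigMin X + b * eigMin Y ≤ lZ i := by
      intro i
      rw [hmix i]
      have h1 := mul_le_mul_of_nonneg_left (hzX_ge i) ha
      have h2 := mul_le_mul_of_nonneg_left (hzY_ge i) hb
      linarith
    have hZmax : eigMax Z ≤ α := by
      refine eigMax_le hZher fun i => ?_
      have h1 := hlZ_le i
      have h2 : a * eigMax X + b * eigMax Y ≤ a * α + b * α := by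
        have := mul_le_mul_of_nonneg_left hXmax ha
        have := mul_le_mul_of_nonneg_left hYmax hb
        linarith
      have h3 : a * α + b * α = α := by linear_combination α * hab
      linarith
    have hZcond : eigMax Z ≤ κ * eigMin Z := by
      have hminZ : a * eigMin X + b * eigMin Y ≤ eigMin Z :=
        le_eigMin hZher fun i => hlZ_ge i
      refine eigMax_le hZher fun i => ?_
      have h1 := hlZ_le i
      have h2 : a * eigMax X + b * eigMax Y ≤ κ * (a * eigMin X + b * eigMin Y) := by
        have hx := mul_le_mul_of_nonneg_left hXcond ha
        have hy := mul_le_mul_of_nonneg_left hYcond hb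
        nlinarith [hx, hy]
      have h3 : κ * (a * eigMin X + b * eigMin Y) ≤ κ * eigMin Z :=
        mul_le_mul_of_nonneg_left hminZ hκ0.le
      linarith
    refine ⟨⟨hZpd, hZmax, hZcond⟩, ?_⟩
    -- the functional inequality
    have eigZ := eig_facts hκ0.le hZpd hZmax hZcond
    have htrZ1 : (mpow Z (-p)).trace = ∑ i, lZ i ^ (-p) := by
      rw [mpow, dif_pos hZher]
      exact trace_UDU _ (Unitary.coe_star_mul_self _) _
    have htrX1 : (mpow X (-p)).trace = ∑ i, lX i ^ (-p) := by
      rw [mpow, dif_pos hXpd.1]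
      exact trace_UDU _ (Unitary.coe_star_mul_self _) _
    have htrY1 : (mpow Y (-p)).trace = ∑ i, lY i ^ (-p) := by
      rw [mpow, dif_pos hYpd.1]
      exact trace_UDU _ (Unitary.coe_star_mul_self _) _
    have htrZ2 : (Zᵀ * Z).trace = ∑ i, (lZ i)^2 := trace_sq hZher
    have htrX2 : (Xᵀ * X).trace = ∑ i, (lX i)^2 := trace_sq hXpd.1
    have htrY2 : (Yᵀ * Y).trace = ∑ i, (lY i)^2 := trace_sq hYpd.1
    rw [hfdef]
    simp only
    rw [htrZ1, htrX1, htrY1, htrZ2, htrX2, htrY2]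
    exact abstract_core hn p α κ hp hα hκ lX lY lZ CX CY a b ha hb hab
      eigX.1 eigY.1 eigZ.1 eigZ.2 hCX0 hCY0 hrowX hrowY hcolX hcolY hkey hmix
  constructor
  · intro X hX Y hY a b ha hb hab
    exact (master X hX Y hY a b ha hb hab).1
  · intro X hX Y hY a b ha hb hab
    have h := (master X hX Y hY a b ha hb hab).2
    simpa [smul_eq_mul] using h
end

section
/- For every real p > 0, the function g(X) = Tr(X^{−p}) is convex on the convex cone of symmetric positive definite n×n real matrices: for all symmetric positive definite A, B and all γ ∈ [0,1], Tr((γA + (1−γ)B)^{−p}) ≤ γ·Tr(A^{−p}) + (1−γ)·Tr(B^{−p}). -/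
open Matrix

/-! ### Auxiliary lemmas -/

section Aux

lemma convexOn_rpow_neg {p : ℝ} (hp : 0 < p) :
    ConvexOn ℝ (Set.Ioi (0:ℝ)) fun x : ℝ => x ^ (-p) := by
  have hd1 : ∀ x ∈ Set.Ioi (0:ℝ), HasDerivAt (fun x : ℝ => x ^ (-p)) (-p * x ^ (-p - 1)) x :=
    fun x hx => Real.hasDerivAt_rpow_const (p := -p) (Or.inl (ne_of_gt hx))
  have hd2 : ∀ x ∈ Set.Ioi (0:ℝ),
      HasDerivAt (fun x : ℝ => -p * x ^ (-p - 1)) (-p * ((-p - 1) * x ^ (-p - 1 - 1))) x :=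
    fun x hx => (Real.hasDerivAt_rpow_const (p := -p - 1) (Or.inl (ne_of_gt hx))).const_mul _
  have hEq : Set.EqOn (deriv fun x : ℝ => x ^ (-p)) (fun x : ℝ => -p * x ^ (-p - 1))
      (Set.Ioi 0) := fun x hx => (hd1 x hx).deriv
  have hev : ∀ x ∈ Set.Ioi (0:ℝ),
      (deriv fun x : ℝ => x ^ (-p)) =ᶠ[nhds x] fun x : ℝ => -p * x ^ (-p - 1) :=
    fun x hx => Filter.eventuallyEq_of_mem (isOpen_Ioi.mem_nhds hx) hEq
  apply convexOn_of_deriv2_nonneg (convex_Ioi 0)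
  · exact fun x hx => (hd1 x hx).continuousAt.continuousWithinAt
  · rw [interior_Ioi]
    exact fun x hx => (hd1 x hx).differentiableAt.differentiableWithinAt
  · rw [interior_Ioi]
    intro x hx
    exact (((hev x hx).differentiableAt_iff).2 (hd2 x hx).differentiableAt).differentiableWithinAt
  · rw [interior_Ioi]
    intro x hx
    have h2 : deriv^[2] (fun x : ℝ => x ^ (-p)) x = -p * ((-p - 1) * x ^ (-p - 1 - 1)) := by
      have h21 : deriv^[2] (fun x : ℝ => x ^ (-p)) = deriv (deriv fun x : ℝ => x ^ (-p)) := rfl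
      rw [h21, (hev x hx).deriv_eq]
      exact (hd2 x hx).deriv
    rw [h2]
    have hx' : (0:ℝ) ≤ x ^ (-p - 1 - 1) := Real.rpow_nonneg (le_of_lt hx) _
    nlinarith [mul_nonneg (mul_nonneg hp.le hp.le) hx', mul_nonneg hp.le hx']

variable {n : ℕ}

lemma star_eq_t (V : Matrix (Fin n) (Fin n) ℝ) : star V = Vᵀ := by
  ext i j
  simp [Matrix.star_apply]

lemma dot_conj_diag (U : Matrix (Fin n) (Fin n) ℝ) (d : Fin n → ℝ) (v : Fin n → ℝ) :
    v ⬝ᵥ (U * Matrix.diagonal d * Uᵀ) *ᵥ v = ∑ j, d j * ((v ᵥ* U) j) ^ 2 := by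
  rw [← Matrix.mulVec_mulVec, ← Matrix.mulVec_mulVec, Matrix.dotProduct_mulVec,
    Matrix.mulVec_transpose]
  simp only [dotProduct, Matrix.mulVec_diagonal]
  refine Finset.sum_congr rfl fun j _ => ?_
  ring

lemma dot_entry (V M : Matrix (Fin n) (Fin n) ℝ) (i : Fin n) :
    (Vᵀ * M * V) i i = (fun k => V k i) ⬝ᵥ (M *ᵥ fun k => V k i) := by
  simp only [Matrix.mul_apply, Matrix.transpose_apply, Matrix.mulVec, dotProduct,
    Finset.sum_mul, Finset.mul_sum]
  rw [Finset.sum_comm]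
  refine Finset.sum_congr rfl fun a _ => Finset.sum_congr rfl fun b _ => ?_
  ring

lemma trace_conj (V M : Matrix (Fin n) (Fin n) ℝ) (hV : V * Vᵀ = 1) :
    (Vᵀ * M * V).trace = M.trace := by
  rw [Matrix.trace_mul_cycle, hV, Matrix.one_mul]

lemma mpow_eq {M : Matrix (Fin n) (Fin n) ℝ} (h : M.IsHermitian) (r : ℝ) :
    mpow M r = (h.eigenvectorUnitary : Matrix (Fin n) (Fin n) ℝ) *
      Matrix.diagonal (fun i => h.eigenvalues i ^ r) *
      (h.eigenvectorUnitary : Matrix (Fin n) (Fin n) ℝ)ᵀ := by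
  rw [mpow, dif_pos h, star_eq_t]

lemma spectral_real {M : Matrix (Fin n) (Fin n) ℝ} (h : M.IsHermitian) :
    M = (h.eigenvectorUnitary : Matrix (Fin n) (Fin n) ℝ) *
      Matrix.diagonal h.eigenvalues *
      (h.eigenvectorUnitary : Matrix (Fin n) (Fin n) ℝ)ᵀ := by
  conv_lhs => rw [h.spectral_theorem]
  rw [Unitary.conjStarAlgAut_apply, star_eq_t]
  congr 1

lemma unitary_mul_t {M : Matrix (Fin n) (Fin n) ℝ} (h : M.IsHermitian) :
    (h.eigenvectorUnitary : Matrix (Fin n) (Fin n) ℝ) *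
      (h.eigenvectorUnitary : Matrix (Fin n) (Fin n) ℝ)ᵀ = 1 := by
  rw [← star_eq_t]
  exact Matrix.mem_unitaryGroup_iff.mp h.eigenvectorUnitary.2

lemma t_mul_unitary {M : Matrix (Fin n) (Fin n) ℝ} (h : M.IsHermitian) :
    (h.eigenvectorUnitary : Matrix (Fin n) (Fin n) ℝ)ᵀ *
      (h.eigenvectorUnitary : Matrix (Fin n) (Fin n) ℝ) = 1 := by
  rw [← star_eq_t]
  exact Matrix.mem_unitaryGroup_iff'.mp h.eigenvectorUnitary.2

lemma trace_mpow {M : Matrix (Fin n) (Fin n) ℝ} (h : M.IsHermitian) (r : ℝ) :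
    (mpow M r).trace = ∑ i, h.eigenvalues i ^ r := by
  rw [mpow_eq h r, Matrix.trace_mul_cycle, t_mul_unitary h, Matrix.one_mul,
    Matrix.trace_diagonal]

lemma weights_sum {M : Matrix (Fin n) (Fin n) ℝ} (h : M.IsHermitian) {v : Fin n → ℝ}
    (hv : v ⬝ᵥ v = 1) :
    ∑ j, ((v ᵥ* (h.eigenvectorUnitary : Matrix (Fin n) (Fin n) ℝ)) j) ^ 2 = 1 := by
  have := dot_conj_diag (h.eigenvectorUnitary : Matrix (Fin n) (Fin n) ℝ) (fun _ => 1) v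
  rw [Matrix.diagonal_one, Matrix.mul_one, unitary_mul_t h] at this
  simp only [one_mul] at this
  rw [← this, Matrix.one_mulVec, hv]

lemma quad_mpow_le {M : Matrix (Fin n) (Fin n) ℝ} (hM : M.PosDef) {p : ℝ} (hp : 0 < p)
    {v : Fin n → ℝ} (hv : v ⬝ᵥ v = 1) :
    (v ⬝ᵥ M *ᵥ v) ^ (-p) ≤ v ⬝ᵥ (mpow M (-p)) *ᵥ v := by
  have h := hM.1
  set U := (h.eigenvectorUnitary : Matrix (Fin n) (Fin n) ℝ) with hU
  set w := fun j => ((v ᵥ* U) j) ^ 2 with hw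
  have hq1 : v ⬝ᵥ M *ᵥ v = ∑ j, h.eigenvalues j * w j := by
    conv_lhs => rw [spectral_real h]
    exact dot_conj_diag U _ v
  have hq2 : v ⬝ᵥ (mpow M (-p)) *ᵥ v = ∑ j, (h.eigenvalues j ^ (-p)) * w j := by
    rw [mpow_eq h]
    exact dot_conj_diag U _ v
  have hw1 : ∑ j, w j = 1 := weights_sum h hv
  have hjen := (convexOn_rpow_neg hp).map_sum_le (t := Finset.univ)
    (w := w) (p := h.eigenvalues) (fun j _ => sq_nonneg _) hw1
    (fun j _ => Set.mem_Ioi.mpr (hM.eigenvalues_pos j))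
  rw [hq1, hq2]
  calc (∑ j, h.eigenvalues j * w j) ^ (-p)
      = (∑ j, w j • h.eigenvalues j) ^ (-p) := by
        congr 1; simp [smul_eq_mul, mul_comm]
    _ ≤ ∑ j, w j • (h.eigenvalues j ^ (-p)) := hjen
    _ = ∑ j, (h.eigenvalues j ^ (-p)) * w j := by
        simp [smul_eq_mul, mul_comm]

end Aux

/-- For every `p > 0`, `g(X) = Tr(X^{−p})` is convex on the cone of
symmetric positive definite matrices:
`Tr((γA + (1−γ)B)^{−p}) ≤ γ·Tr(A^{−p}) + (1−γ)·Tr(B^{−p})` for all `γ ∈ [0,1]`. -/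
theorem trace_power_convex (n : ℕ) (p : ℝ) (hp : 0 < p)
    (A B : Matrix (Fin n) (Fin n) ℝ) (hA : A.PosDef) (hB : B.PosDef)
    (γ : ℝ) (hγ0 : 0 ≤ γ) (hγ1 : γ ≤ 1) :
    (mpow (γ • A + (1 - γ) • B) (-p)).trace ≤
      γ * (mpow A (-p)).trace + (1 - γ) * (mpow B (-p)).trace := by
  set C := γ • A + (1 - γ) • B with hCdef
  have hC : C.IsHermitian := by
    unfold Matrix.IsHermitian
    rw [hCdef, Matrix.conjTranspose_add, Matrix.conjTranspose_smul, Matrix.conjTranspose_smul,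
      hA.1.eq, hB.1.eq]
    simp
  set V := (hC.eigenvectorUnitary : Matrix (Fin n) (Fin n) ℝ) with hV
  have hVV : V * Vᵀ = 1 := unitary_mul_t hC
  have hVtV : Vᵀ * V = 1 := t_mul_unitary hC
  have hdiag : Vᵀ * C * V = Matrix.diagonal hC.eigenvalues := by
    have := hC.conjStarAlgAut_star_eigenvectorUnitary
    simp only [Unitary.conjStarAlgAut_apply, Unitary.coe_star, star_star, star_eq_t,
      Matrix.transpose_transpose] at this
    rw [this]
    ext i j
    simp [Matrix.diagonal_apply]
  -- columns of V
  set v : Fin n → Fin n → ℝ := fun i k => V k i with hv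
  have hvnorm : ∀ i, v i ⬝ᵥ v i = 1 := by
    intro i
    have := congrFun (congrFun hVtV i) i
    simp only [Matrix.one_apply_eq] at this
    rw [← this]
    simp [Matrix.mul_apply, dotProduct, hv]
  have hvne : ∀ i, v i ≠ 0 := by
    intro i h0
    have := hvnorm i
    rw [h0] at this
    simp at this
  have haq : ∀ i, 0 < v i ⬝ᵥ A *ᵥ v i := by
    intro i
    have := hA.dotProduct_mulVec_pos (hvne i)
    simpa using this
  have hbq : ∀ i, 0 < v i ⬝ᵥ B *ᵥ v i := by
    intro i
    have := hB.dotProduct_mulVec_pos (hvne i)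
    simpa using this
  have hmu : ∀ i, hC.eigenvalues i = γ * (v i ⬝ᵥ A *ᵥ v i) + (1 - γ) * (v i ⬝ᵥ B *ᵥ v i) := by
    intro i
    have h1 : hC.eigenvalues i = (Vᵀ * C * V) i i := by
      rw [hdiag, Matrix.diagonal_apply_eq]
    rw [h1, dot_entry]
    rw [hCdef]
    simp only [Matrix.add_mulVec, Matrix.smul_mulVec, dotProduct_add, dotProduct_smul,
      smul_eq_mul]
    rfl
  -- pointwise bound
  have key : ∀ i, hC.eigenvalues i ^ (-p) ≤
      γ * ((Vᵀ * mpow A (-p) * V) i i) + (1 - γ) * ((Vᵀ * mpow B (-p) * V) i i) := by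
    intro i
    have hconv : (γ • (v i ⬝ᵥ A *ᵥ v i) + (1 - γ) • (v i ⬝ᵥ B *ᵥ v i)) ^ (-p) ≤
        γ • ((v i ⬝ᵥ A *ᵥ v i) ^ (-p)) + (1 - γ) • ((v i ⬝ᵥ B *ᵥ v i) ^ (-p)) :=
      (convexOn_rpow_neg hp).2 (Set.mem_Ioi.mpr (haq i)) (Set.mem_Ioi.mpr (hbq i))
        hγ0 (by linarith) (by ring)
    have h2 : hC.eigenvalues i ^ (-p) ≤
        γ * ((v i ⬝ᵥ A *ᵥ v i) ^ (-p)) + (1 - γ) * ((v i ⬝ᵥ B *ᵥ v i) ^ (-p)) := by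
      rw [hmu i]
      simpa [smul_eq_mul] using hconv
    refine h2.trans ?_
    rw [dot_entry, dot_entry]
    have hAle := quad_mpow_le hA hp (hvnorm i)
    have hBle := quad_mpow_le hB hp (hvnorm i)
    have := add_le_add (mul_le_mul_of_nonneg_left hAle hγ0)
      (mul_le_mul_of_nonneg_left hBle (by linarith : (0:ℝ) ≤ 1 - γ))
    exact this
  -- sum up
  calc (mpow C (-p)).trace = ∑ i, hC.eigenvalues i ^ (-p) := trace_mpow hC (-p)
    _ ≤ ∑ i, (γ * ((Vᵀ * mpow A (-p) * V) i i) + (1 - γ) * ((Vᵀ * mpow B (-p) * V) i i)) :=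
        Finset.sum_le_sum fun i _ => key i
    _ = γ * (Vᵀ * mpow A (-p) * V).trace + (1 - γ) * (Vᵀ * mpow B (-p) * V).trace := by
        rw [Finset.sum_add_distrib, ← Finset.mul_sum, ← Finset.mul_sum]
        simp [Matrix.trace, Matrix.diag]
    _ = γ * (mpow A (-p)).trace + (1 - γ) * (mpow B (-p)).trace := by
        rw [trace_conj V _ hVV, trace_conj V _ hVV]
end
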